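/- Let M = (S,P,s₀,L) be a finite Markov chain, a ∈ AP, and T = {s ∈ S | a ∈ L(s)}. Consider the states reachable from s₀ by path fragments whose states avoid T. (1) If among these T-avoiding reachable states there is a directed cycle in the digraph of M, then Pr{π | π_j ∈ T for some j ≤ n} < 1 for every n ∈ ℕ, i.e. V_{=1}(◇_{≤x} a) = ∅. (2) Otherwise (the digraph restricted to these states is acyclic), V_{=1}(◇_{≤x} a) ≠ ∅ and its minimum equals the length of a longest path fragment from s₀ to T whose states before the last one avoid T. -/

import Mathlib

open MeasureTheory Finset
open scoped ENNReal Classical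

namespace ASRG

noncomputable def wt {S : Type} [Fintype S] (P : S → S → ℝ≥0∞) (s₀ : S) (n : ℕ)
    (v : Fin (n+1) → S) : ℝ≥0∞ :=
  (if v 0 = s₀ then 1 else 0) * ∏ k : Fin n, P (v k.castSucc) (v k.succ)

lemma wt_sum {S : Type} [Fintype S] (P : S → S → ℝ≥0∞) (hP : ∀ s, ∑ t, P s t = 1) (s₀ : S) :
    ∀ n, ∑ v : Fin (n+1) → S, wt P s₀ n v = 1 := by
  intro n
  induction n with
  | zero =>
    rw [← Equiv.sum_comp (Equiv.funUnique (Fin 1) S).symm]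
    simp [wt, Equiv.funUnique]
  | succ n ih =>
    rw [← Equiv.sum_comp (Fin.snocEquiv (fun _ => S))]
    rw [Fintype.sum_prod_type_right]
    have key : ∀ (w : Fin (n+1) → S) (s : S),
        wt P s₀ (n+1) (Fin.snocEquiv (fun _ => S) (s, w)) = wt P s₀ n w * P (w (Fin.last n)) s := by
      intro w s
      simp only [Fin.snocEquiv, Equiv.coe_fn_mk]
      unfold wt
      rw [Fin.prod_univ_castSucc]
      simp only [show (0 : Fin (n+2)) = Fin.castSucc 0 from rfl, Fin.succ_castSucc,
        Fin.succ_last, Fin.snoc_castSucc, Fin.snoc_last]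
      ring
    simp only [key]
    calc ∑ w : Fin (n+1) → S, ∑ s : S, wt P s₀ n w * P (w (Fin.last n)) s
        = ∑ w : Fin (n+1) → S, wt P s₀ n w * ∑ s : S, P (w (Fin.last n)) s := by
          simp [Finset.mul_sum]
      _ = 1 := by simp only [hP, mul_one]; exact ih

def Ext {S : Type} (n : ℕ) (v : Fin (n+1) → S) : ℕ → S :=
  fun k => if h : k < n+1 then v ⟨k, h⟩ else v 0

lemma Ext_le {S : Type} {n k : ℕ} (v : Fin (n+1) → S) (hk : k ≤ n) :
    Ext n v k = v ⟨k, by omega⟩ := by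
  unfold Ext; rw [dif_pos (by omega)]

lemma wt_eq_zero_iff' {S : Type} [Fintype S] (P : S → S → ℝ≥0∞) (s₀ : S) (n : ℕ)
    (v : Fin (n+1) → S) :
    wt P s₀ n v ≠ 0 ↔ (Ext n v 0 = s₀ ∧ ∀ i < n, P (Ext n v i) (Ext n v (i+1)) ≠ 0) := by
  unfold wt
  rw [mul_ne_zero_iff]
  constructor
  · rintro ⟨h1, h2⟩
    constructor
    · rw [Ext_le v (by omega)]
      by_contra hne
      rw [if_neg (by simpa [Fin.mk_zero] using hne)] at h1
      exact h1 rfl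
    · intro i hi
      rw [Ext_le v (by omega), Ext_le v (by omega)]
      have := Finset.prod_ne_zero_iff.mp h2 ⟨i, hi⟩ (Finset.mem_univ _)
      exact this
  · rintro ⟨h1, h2⟩
    rw [Ext_le v (by omega)] at h1
    constructor
    · rw [if_pos (by simpa [Fin.mk_zero] using h1)]; exact one_ne_zero
    · rw [Finset.prod_ne_zero_iff]
      intro i _
      have := h2 i.1 i.2
      rwa [Ext_le v (by omega), Ext_le v (by omega)] at this

lemma mu_cover {S : Type} [Fintype S] [DecidableEq S] [MeasurableSpace S]
    (P : S → S → ℝ≥0∞) (s₀ : S) (μ : Measure (ℕ → S)) (n : ℕ)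
    (hcyl : ∀ (u : ℕ → S),
      μ {π | ∀ k ≤ n, π k = u k} =
        (if u 0 = s₀ then 1 else 0) * ∏ k ∈ Finset.range n, P (u k) (u (k + 1)))
    (Q : Set (ℕ → S))
    (hQ : ∀ π π' : ℕ → S, (∀ k ≤ n, π k = π' k) → π ∈ Q → π' ∈ Q) :
    μ Q ≤ ∑ v ∈ Finset.univ.filter (fun v : Fin (n+1) → S => Ext n v ∈ Q), wt P s₀ n v := by
  set E : (Fin (n+1) → S) → (ℕ → S) := Ext n with hE
  have hextle : ∀ (v : Fin (n+1) → S) (k : ℕ) (hk : k ≤ n), E v k = v ⟨k, by omega⟩ := by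
    intro v k hk; exact Ext_le v hk
  have hwt : ∀ v : Fin (n+1) → S, μ {π | ∀ k ≤ n, π k = E v k} = wt P s₀ n v := by
    intro v
    rw [hcyl (E v)]
    unfold wt
    congr 1
    · rw [hextle v 0 (by omega)]
      by_cases h : v 0 = s₀ <;> simp [Fin.mk_zero, h]
    · rw [← Fin.prod_univ_eq_prod_range (fun i => P (E v i) (E v (i+1))) n]
      refine Finset.prod_congr rfl fun i _ => ?_
      rw [hextle v i.1 (by omega), hextle v (i.1+1) (by omega)]
      rfl
  have hsub : Q ⊆ ⋃ v ∈ Finset.univ.filter (fun v : Fin (n+1) → S => E v ∈ Q),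
      {π : ℕ → S | ∀ k ≤ n, π k = E v k} := by
    intro π hπ
    have hmem1 : (fun i : Fin (n+1) => π i) ∈
        Finset.univ.filter (fun v : Fin (n+1) → S => E v ∈ Q) := by
      simp only [Finset.mem_filter, Finset.mem_univ, true_and]
      exact hQ π _ (fun k hk => (hextle (fun i : Fin (n+1) => π i) k hk).symm) hπ
    have hmem2 : π ∈ {π' : ℕ → S | ∀ k ≤ n, π' k = E (fun i : Fin (n+1) => π i) k} := by
      intro k hk; exact (hextle (fun i : Fin (n+1) => π i) k hk).symm
    exact Set.mem_biUnion hmem1 hmem2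
  calc μ Q ≤ ∑ v ∈ Finset.univ.filter (fun v : Fin (n+1) → S => E v ∈ Q),
        μ {π : ℕ → S | ∀ k ≤ n, π k = E v k} :=
      le_trans (measure_mono hsub) (measure_biUnion_finset_le _ _)
    _ = _ := Finset.sum_congr rfl fun v _ => hwt v

lemma sum_filter_lt_one {ι : Type*} [Fintype ι] (f : ι → ℝ≥0∞) (hsum : ∑ i, f i = 1)
    (p : ι → Prop) (inst : DecidablePred p) (i₀ : ι) (hi₀ : ¬ p i₀) (hf : f i₀ ≠ 0) :
    ∑ i ∈ @Finset.filter _ p inst Finset.univ, f i < 1 := by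
  clear! inst
  classical
  have hsplit : (∑ i ∈ Finset.univ.filter p, f i) +
      (∑ i ∈ Finset.univ.filter (fun i => ¬ p i), f i) = 1 := by
    rw [Finset.sum_filter_add_sum_filter_not]; exact hsum
  have hge : f i₀ ≤ ∑ i ∈ Finset.univ.filter (fun i => ¬ p i), f i :=
    Finset.single_le_sum (fun i _ => zero_le)
      (Finset.mem_filter.mpr ⟨Finset.mem_univ _, hi₀⟩)
  refine lt_of_le_of_ne (hsplit ▸ le_self_add) fun heq => ?_
  rw [heq] at hsplit
  have h0 : (∑ i ∈ Finset.univ.filter (fun i => ¬ p i), f i) = 0 := by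
    have h1 : (1 : ℝ≥0∞) + (∑ i ∈ Finset.univ.filter (fun i => ¬ p i), f i) = 1 + 0 := by
      rw [add_zero]; exact hsplit
    exact (ENNReal.add_right_inj ENNReal.one_ne_top).mp h1
  rw [h0] at hge
  exact hf (le_antisymm hge zero_le)

lemma mu_lt_one {S : Type} [Fintype S] [DecidableEq S] [MeasurableSpace S]
    (P : S → S → ℝ≥0∞) (hP : ∀ s, ∑ t, P s t = 1) (s₀ : S)
    (μ : Measure (ℕ → S)) (n : ℕ)
    (hcyl : ∀ (u : ℕ → S),
      μ {π | ∀ k ≤ n, π k = u k} =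
        (if u 0 = s₀ then 1 else 0) * ∏ k ∈ Finset.range n, P (u k) (u (k + 1)))
    (T : Set S) (u : ℕ → S) (hu0 : u 0 = s₀)
    (hupos : ∀ i < n, P (u i) (u (i+1)) ≠ 0) (huT : ∀ i ≤ n, u i ∉ T) :
    μ {π | ∃ j ≤ n, π j ∈ T} < 1 := by
  set Q : Set (ℕ → S) := {π | ∃ j ≤ n, π j ∈ T} with hQdef
  have hQ : ∀ π π' : ℕ → S, (∀ k ≤ n, π k = π' k) → π ∈ Q → π' ∈ Q := by
    rintro π π' hagree ⟨j, hj, hmem⟩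
    exact ⟨j, hj, by rw [← hagree j hj]; exact hmem⟩
  have hcov := mu_cover P s₀ μ n hcyl Q hQ
  set v₀ : Fin (n+1) → S := fun i => u i with hv₀
  have hE : ∀ k ≤ n, Ext n v₀ k = u k := fun k hk => Ext_le v₀ hk
  have hv₀wt : wt P s₀ n v₀ ≠ 0 := by
    rw [wt_eq_zero_iff']
    refine ⟨by rw [hE 0 (by omega)]; exact hu0, fun i hi => ?_⟩
    rw [hE i (by omega), hE (i+1) (by omega)]
    exact hupos i hi
  refine lt_of_le_of_lt hcov (sum_filter_lt_one _ (wt_sum P hP s₀ n) _ _ v₀ ?_ hv₀wt)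
  rintro ⟨j, hj, hmem⟩
  rw [hE j hj] at hmem
  exact huT j hj hmem

lemma sum_filter_zero {ι : Type*} [Fintype ι] (f : ι → ℝ≥0∞) (p : ι → Prop)
    (inst : DecidablePred p) (h : ∀ i, p i → f i = 0) :
    ∑ i ∈ @Finset.filter _ p inst Finset.univ, f i = 0 :=
  Finset.sum_eq_zero fun i hi => h i (Finset.mem_filter.mp hi).2

lemma mu_eq_one {S : Type} [Fintype S] [DecidableEq S] [MeasurableSpace S]
    (P : S → S → ℝ≥0∞) (s₀ : S)
    (μ : Measure (ℕ → S)) [IsProbabilityMeasure μ] (n : ℕ)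
    (hcyl : ∀ (u : ℕ → S),
      μ {π | ∀ k ≤ n, π k = u k} =
        (if u 0 = s₀ then 1 else 0) * ∏ k ∈ Finset.range n, P (u k) (u (k + 1)))
    (T : Set S)
    (hzero : ∀ u : ℕ → S, u 0 = s₀ → (∀ i < n, P (u i) (u (i+1)) ≠ 0) → ∃ i ≤ n, u i ∈ T) :
    μ {π | ∃ j ≤ n, π j ∈ T} = 1 := by
  set Qc : Set (ℕ → S) := {π | ∀ j ≤ n, π j ∉ T} with hQcdef
  have hQ : ∀ π π' : ℕ → S, (∀ k ≤ n, π k = π' k) → π ∈ Qc → π' ∈ Qc := by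
    intro π π' hagree hπ j hj
    rw [← hagree j hj]
    exact hπ j hj
  have hcov := mu_cover P s₀ μ n hcyl Qc hQ
  have hQc0 : μ Qc = 0 := by
    refine le_antisymm (le_trans hcov (le_of_eq (sum_filter_zero _ _ _ ?_))) zero_le
    intro v hv'
    by_contra hne
    obtain ⟨h0, hpos⟩ := (wt_eq_zero_iff' P s₀ n v).mp hne
    obtain ⟨i, hi, hiT⟩ := hzero (Ext n v) h0 hpos
    exact hv' i hi hiT
  have hunion : {π : ℕ → S | ∃ j ≤ n, π j ∈ T} ∪ Qc = Set.univ := by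
    ext π
    simp only [Set.mem_union, Set.mem_setOf_eq, Set.mem_univ, iff_true, hQcdef]
    by_cases h : ∃ j ≤ n, π j ∈ T
    · exact Or.inl h
    · push_neg at h
      exact Or.inr h
  have h1 : (1 : ℝ≥0∞) ≤ μ {π : ℕ → S | ∃ j ≤ n, π j ∈ T} := by
    calc (1 : ℝ≥0∞) = μ Set.univ := (measure_univ).symm
      _ = μ ({π : ℕ → S | ∃ j ≤ n, π j ∈ T} ∪ Qc) := by rw [hunion]
      _ ≤ μ {π : ℕ → S | ∃ j ≤ n, π j ∈ T} + μ Qc := measure_union_le _ _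
      _ = μ {π : ℕ → S | ∃ j ≤ n, π j ∈ T} := by rw [hQc0, add_zero]
  exact le_antisymm prob_le_one h1

-- ## Combinatorics

variable {S : Type} [Fintype S]

def Reach (P : S → S → ℝ≥0∞) (s₀ : S) (T : Set S) : Set S :=
  {s | ∃ (k : ℕ) (u : ℕ → S),
    u 0 = s₀ ∧ (∀ i < k, 0 < P (u i) (u (i + 1))) ∧ (∀ i ≤ k, u i ∉ T) ∧ u k = s}

lemma reach_not_mem {P : S → S → ℝ≥0∞} {s₀ : S} {T : Set S} {s : S}
    (h : s ∈ Reach P s₀ T) : s ∉ T := by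
  obtain ⟨k, u, -, -, hT, rfl⟩ := h
  exact hT k le_rfl

/-- a cycle inside `Reach` yields an infinite positive `T`-avoiding path from `s₀`. -/
lemma cycle_path {P : S → S → ℝ≥0∞} {s₀ : S} {T : Set S}
    (hc : ∃ (k : ℕ) (u : ℕ → S), 0 < k ∧
      (∀ i ≤ k, u i ∈ Reach P s₀ T) ∧ (∀ i < k, 0 < P (u i) (u (i + 1))) ∧ u 0 = u k) :
    ∃ p : ℕ → S, p 0 = s₀ ∧ (∀ i, P (p i) (p (i+1)) ≠ 0) ∧ (∀ i, p i ∉ T) := by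
  obtain ⟨k, c, hk, hcR, hcpos, hcyc⟩ := hc
  obtain ⟨j, w, hw0, hwpos, hwT, hwj⟩ := hcR 0 (by omega)
  have hmodsucc : ∀ m : ℕ, (m+1) % k = (m % k + 1) % k := by
    intro m
    have hmd := Nat.mod_add_div m k
    conv_lhs => rw [show m + 1 = (m % k + 1) + k * (m / k) by omega]
    exact Nat.add_mul_mod_self_left _ _ _
  have hmod : ∀ m, P (c (m % k)) (c ((m+1) % k)) ≠ 0 := by
    intro m
    have hr : m % k < k := Nat.mod_lt _ hk
    rw [hmodsucc m]
    by_cases h : m % k + 1 < k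
    · rw [Nat.mod_eq_of_lt h]
      exact (hcpos _ (by omega)).ne'
    · have hrk : m % k + 1 = k := by omega
      rw [hrk, Nat.mod_self]
      have := hcpos (m % k) hr
      rw [hrk, ← hcyc] at this
      exact this.ne'
  refine ⟨fun i => if i ≤ j then w i else c ((i - j) % k), ?_, ?_, ?_⟩
  · simp [hw0]
  · intro i
    show P (if i ≤ j then w i else c ((i - j) % k))
      (if i + 1 ≤ j then w (i+1) else c ((i + 1 - j) % k)) ≠ 0
    by_cases h1 : i + 1 ≤ j
    · rw [if_pos (by omega : i ≤ j), if_pos h1]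
      exact (hwpos i (by omega)).ne'
    · have hij : j ≤ i := by omega
      have hpi : (if i ≤ j then w i else c ((i - j) % k)) = c ((i - j) % k) := by
        by_cases h2 : i ≤ j
        · have hi : i = j := by omega
          subst hi
          rw [if_pos le_rfl, Nat.sub_self, Nat.zero_mod, hwj]
        · rw [if_neg h2]
      rw [hpi, if_neg (by omega), show i + 1 - j = (i - j) + 1 by omega]
      exact hmod (i - j)
  · intro i
    show (if i ≤ j then w i else c ((i - j) % k)) ∉ T
    by_cases h1 : i ≤ j
    · rw [if_pos h1]; exact hwT i h1
    · rw [if_neg h1]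
      exact reach_not_mem (hcR _ (le_of_lt (Nat.mod_lt _ hk)))

lemma nocycle_bound {P : S → S → ℝ≥0∞} {s₀ : S} {T : Set S}
    (hnc : ¬ ∃ (k : ℕ) (u : ℕ → S), 0 < k ∧
      (∀ i ≤ k, u i ∈ Reach P s₀ T) ∧ (∀ i < k, 0 < P (u i) (u (i + 1))) ∧ u 0 = u k)
    (l : ℕ) (u : ℕ → S) (hu0 : u 0 = s₀)
    (hpos : ∀ i < l, P (u i) (u (i+1)) ≠ 0) (hT : ∀ i ≤ l, u i ∉ T) :
    l + 1 ≤ Fintype.card S := by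
  have key : ∀ a b : ℕ, a < b → b ≤ l → u a ≠ u b := by
    intro a b hab hbl heq
    apply hnc
    refine ⟨b - a, fun t => u (a + t), by omega, ?_, ?_, ?_⟩
    · intro i hi
      exact ⟨a + i, u, hu0, fun x hx => pos_iff_ne_zero.mpr (hpos x (by omega)),
        fun x hx => hT x (by omega), rfl⟩
    · intro i hi
      show 0 < P (u (a + i)) (u (a + (i+1)))
      rw [show a + (i+1) = (a + i) + 1 by omega]
      exact pos_iff_ne_zero.mpr (hpos (a+i) (by omega))
    · show u (a + 0) = u (a + (b - a))
      rw [Nat.add_zero, show a + (b - a) = b by omega]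
      exact heq
  have hinj : Function.Injective (fun i : Fin (l+1) => u i) := by
    intro a b hab
    simp only at hab
    by_contra hne
    rcases Nat.lt_or_ge a.1 b.1 with h | h
    · exact key a.1 b.1 h (by omega) hab
    · have h' : b.1 < a.1 := by
        rcases Nat.lt_or_ge b.1 a.1 with h2 | h2
        · exact h2
        · exact absurd (Fin.ext (by omega)) hne
      exact key b.1 a.1 h' (by omega) hab.symm
  simpa using Fintype.card_le_of_injective _ hinj

lemma exists_succ {P : S → S → ℝ≥0∞} (hP : ∀ s, ∑ t, P s t = 1) (s : S) :
    ∃ t, P s t ≠ 0 := by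
  by_contra h
  push_neg at h
  have : ∑ t, P s t = 0 := Finset.sum_eq_zero fun t _ => h t
  rw [hP s] at this
  exact one_ne_zero this

def KSet (P : S → S → ℝ≥0∞) (s₀ : S) (T : Set S) : Set ℕ :=
  {k | ∃ u : ℕ → S, u 0 = s₀ ∧ (∀ i < k, 0 < P (u i) (u (i + 1))) ∧
    (∀ i < k, u i ∉ T) ∧ u k ∈ T}

lemma KSet_bdd {P : S → S → ℝ≥0∞} {s₀ : S} {T : Set S}
    (hnc : ¬ ∃ (k : ℕ) (u : ℕ → S), 0 < k ∧
      (∀ i ≤ k, u i ∈ Reach P s₀ T) ∧ (∀ i < k, 0 < P (u i) (u (i + 1))) ∧ u 0 = u k) :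
    ∀ k ∈ KSet P s₀ T, k ≤ Fintype.card S := by
  rintro k ⟨u, h0, hpos, hT, hkT⟩
  rcases Nat.eq_zero_or_pos k with rfl | hk
  · exact Nat.zero_le _
  · obtain ⟨l, rfl⟩ : ∃ l, k = l + 1 := ⟨k - 1, by omega⟩
    have := nocycle_bound hnc l u h0 (fun i hi => (hpos i (by omega)).ne')
      (fun i hi => hT i (by omega))
    omega

lemma KSet_nonempty {P : S → S → ℝ≥0∞} {s₀ : S} {T : Set S}
    (hP : ∀ s, ∑ t, P s t = 1)
    (hnc : ¬ ∃ (k : ℕ) (u : ℕ → S), 0 < k ∧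
      (∀ i ≤ k, u i ∈ Reach P s₀ T) ∧ (∀ i < k, 0 < P (u i) (u (i + 1))) ∧ u 0 = u k) :
    (KSet P s₀ T).Nonempty := by
  choose g hg using exists_succ hP
  set q : ℕ → S := fun i => g^[i] s₀ with hq
  have q0 : q 0 = s₀ := rfl
  have qpos : ∀ i, P (q i) (q (i+1)) ≠ 0 := by
    intro i
    have : q (i+1) = g (q i) := Function.iterate_succ_apply' g i s₀
    rw [this]
    exact hg _
  by_cases hhit : ∃ i, q i ∈ T
  · refine ⟨Nat.find hhit, q, q0, fun i _ => pos_iff_ne_zero.mpr (qpos i),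
      fun i hij => Nat.find_min hhit hij, Nat.find_spec hhit⟩
  · exfalso
    push_neg at hhit
    have := nocycle_bound hnc (Fintype.card S) q q0 (fun i _ => qpos i) (fun i _ => hhit i)
    omega

lemma no_avoid_at_sup {P : S → S → ℝ≥0∞} {s₀ : S} {T : Set S}
    (hP : ∀ s, ∑ t, P s t = 1)
    (hnc : ¬ ∃ (k : ℕ) (u : ℕ → S), 0 < k ∧
      (∀ i ≤ k, u i ∈ Reach P s₀ T) ∧ (∀ i < k, 0 < P (u i) (u (i + 1))) ∧ u 0 = u k) :
    ∀ u : ℕ → S, u 0 = s₀ → (∀ i < sSup (KSet P s₀ T), P (u i) (u (i+1)) ≠ 0) →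
      ∃ i ≤ sSup (KSet P s₀ T), u i ∈ T := by
  set m := sSup (KSet P s₀ T) with hm
  intro u h0 hpos
  by_contra hcon
  push_neg at hcon
  have hbdd : BddAbove (KSet P s₀ T) := ⟨Fintype.card S, fun k hk => KSet_bdd hnc k hk⟩
  have grow : ∀ d, ∃ u' : ℕ → S, u' 0 = s₀ ∧ (∀ i < m + d, P (u' i) (u' (i+1)) ≠ 0) ∧
      (∀ i ≤ m + d, u' i ∉ T) := by
    intro d
    induction d with
    | zero => exact ⟨u, h0, fun i hi => hpos i hi, hcon⟩
    | succ d ih =>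
      obtain ⟨u', h0', hpos', hT'⟩ := ih
      obtain ⟨t, ht⟩ := exists_succ hP (u' (m + d))
      refine ⟨fun i => if i ≤ m + d then u' i else t, by simp [h0'], ?_, ?_⟩
      · intro i hi
        show P (if i ≤ m + d then u' i else t) (if i + 1 ≤ m + d then u' (i+1) else t) ≠ 0
        by_cases h1 : i + 1 ≤ m + d
        · rw [if_pos (by omega), if_pos h1]
          exact hpos' i (by omega)
        · have hi' : i = m + d := by omega
          subst hi'
          rw [if_pos le_rfl, if_neg h1]
          exact ht
      · intro i hi
        show (if i ≤ m + d then u' i else t) ∉ T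
        by_cases h1 : i ≤ m + d
        · rw [if_pos h1]; exact hT' i h1
        · rw [if_neg h1]
          intro htT
          -- then m + d + 1 ∈ KSet, contradicting sSup
          have hmem : (m + d + 1) ∈ KSet P s₀ T := by
            refine ⟨fun i => if i ≤ m + d then u' i else t, by simp [h0'], ?_, ?_, ?_⟩
            · intro x hx
              show 0 < P (if x ≤ m + d then u' x else t) (if x + 1 ≤ m + d then u' (x+1) else t)
              by_cases h2 : x + 1 ≤ m + d
              · rw [if_pos (by omega), if_pos h2]
                exact pos_iff_ne_zero.mpr (hpos' x (by omega))
              · have hx' : x = m + d := by omega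
                subst hx'
                rw [if_pos le_rfl, if_neg h2]
                exact pos_iff_ne_zero.mpr ht
            · intro x hx
              show (if x ≤ m + d then u' x else t) ∉ T
              rw [if_pos (by omega)]
              exact hT' x (by omega)
            · show (if m + d + 1 ≤ m + d then u' (m+d+1) else t) ∈ T
              rw [if_neg (by omega)]
              exact htT
          have := le_csSup hbdd hmem
          rw [← hm] at this
          omega
  obtain ⟨u', h0', hpos', hT'⟩ := grow (Fintype.card S)
  have := nocycle_bound hnc (m + Fintype.card S) u' h0' hpos' hT'
  omega

end ASRG

theorem almost_sure_reachability_graph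
    {AP S : Type} [Fintype S] [DecidableEq S] [MeasurableSpace S]
    (P : S → S → ℝ≥0∞) (hP : ∀ s, ∑ t, P s t = 1)
    (s₀ : S) (L : S → Set AP) (a : AP)
    (μ : Measure (ℕ → S)) (hprob : IsProbabilityMeasure μ)
    (hcyl : ∀ (n : ℕ) (u : ℕ → S),
      μ {π | ∀ k ≤ n, π k = u k} =
        (if u 0 = s₀ then 1 else 0) * ∏ k ∈ Finset.range n, P (u k) (u (k + 1)))
    (T : Set S) (hT : T = {s | a ∈ L s})
    -- the states reachable from s₀ by T-avoiding path fragments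
    (R : Set S)
    (hR : R = {s | ∃ (k : ℕ) (u : ℕ → S),
      u 0 = s₀ ∧ (∀ i < k, 0 < P (u i) (u (i + 1))) ∧ (∀ i ≤ k, u i ∉ T) ∧ u k = s}) :
    -- (1)
    ((∃ (k : ℕ) (u : ℕ → S), 0 < k ∧
        (∀ i ≤ k, u i ∈ R) ∧ (∀ i < k, 0 < P (u i) (u (i + 1))) ∧ u 0 = u k) →
      (∀ n : ℕ, μ {π | ∃ j ≤ n, π j ∈ T} < 1) ∧
        {n : ℕ | μ {π | ∃ j ≤ n, π j ∈ T} = 1} = ∅) ∧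
    -- (2)
    (¬ (∃ (k : ℕ) (u : ℕ → S), 0 < k ∧
        (∀ i ≤ k, u i ∈ R) ∧ (∀ i < k, 0 < P (u i) (u (i + 1))) ∧ u 0 = u k) →
      {n : ℕ | μ {π | ∃ j ≤ n, π j ∈ T} = 1}.Nonempty ∧
        sInf {n : ℕ | μ {π | ∃ j ≤ n, π j ∈ T} = 1} =
          sSup {k : ℕ | ∃ u : ℕ → S,
            u 0 = s₀ ∧ (∀ i < k, 0 < P (u i) (u (i + 1))) ∧
              (∀ i < k, u i ∉ T) ∧ u k ∈ T}) := by
  subst hR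
  constructor
  · -- part 1: a cycle among T-avoiding reachable states
    intro hc
    obtain ⟨p, hp0, hppos, hpT⟩ := ASRG.cycle_path hc
    have hlt : ∀ n, μ {π | ∃ j ≤ n, π j ∈ T} < 1 := fun n =>
      ASRG.mu_lt_one P hP s₀ μ n (hcyl n) T p hp0 (fun i _ => hppos i) (fun i _ => hpT i)
    exact ⟨hlt, Set.eq_empty_iff_forall_notMem.mpr fun n hn => (hlt n).ne hn⟩
  · -- part 2: acyclic case
    intro hnc
    haveI := hprob
    have hne := ASRG.KSet_nonempty hP hnc
    have hbdd : BddAbove (ASRG.KSet P s₀ T) :=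
      ⟨Fintype.card S, fun k hk => ASRG.KSet_bdd hnc k hk⟩
    have hmK : sSup (ASRG.KSet P s₀ T) ∈ ASRG.KSet P s₀ T := Nat.sSup_mem hne hbdd
    set m := sSup (ASRG.KSet P s₀ T) with hm
    have hmone : μ {π | ∃ j ≤ m, π j ∈ T} = 1 :=
      ASRG.mu_eq_one P s₀ μ m (hcyl m) T
        (fun u h0 hpos => ASRG.no_avoid_at_sup hP hnc u h0 hpos)
    have hlt : ∀ n < m, μ {π | ∃ j ≤ n, π j ∈ T} < 1 := by
      intro n hn
      obtain ⟨u, h0, hpos, hT', hmT⟩ := hmK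
      exact ASRG.mu_lt_one P hP s₀ μ n (hcyl n) T u h0
        (fun i hi => (hpos i (by omega)).ne') (fun i hi => hT' i (by omega))
    have hmem : m ∈ {n : ℕ | μ {π | ∃ j ≤ n, π j ∈ T} = 1} := hmone
    refine ⟨⟨m, hmem⟩, ?_⟩
    have h1 : sInf {n : ℕ | μ {π | ∃ j ≤ n, π j ∈ T} = 1} = m := by
      refine le_antisymm (Nat.sInf_le hmem) ?_
      by_contra h
      push_neg at h
      have hin := Nat.sInf_mem (⟨m, hmem⟩ : Set.Nonempty _)
      exact (hlt _ h).ne hin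
    rw [h1, hm]
    rfl
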